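/- Let μ ∈ 𝒫([-r,r]) with r ≥ 1 and integers 0 < m < n. Then (1/n)H(μ, 𝒟_n) equals the average over 0 ≤ i ≤ n of the quantities (1/m)H(μ, 𝒟_{i+m} | 𝒟_i), up to an error of O(m/n + (log r)/n). -/

import Mathlib

open MeasureTheory

/-- Real-valued entropy of a measure on `ℝ` with respect to the dyadic partition `𝒟_i`
into intervals of length `2^{-i}`. -/
noncomputable def dyadEntropyR (μ : Measure ℝ) (i : ℕ) : ℝ :=
  ∑' k : ℤ, Real.negMulLog
    (μ (Set.Ico ((k : ℝ) * 2 ^ (-(i : ℤ))) (((k : ℝ) + 1) * 2 ^ (-(i : ℤ))))).toReal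

section helpers
open Real

lemma nml_subadd {a b : ℝ} (ha : 0 ≤ a) (hb : 0 ≤ b) :
    Real.negMulLog (a + b) ≤ Real.negMulLog a + Real.negMulLog b := by
  have key : ∀ x y : ℝ, 0 ≤ x → 0 ≤ y → -x * Real.log (x + y) ≤ Real.negMulLog x := by
    intro x y hx hy
    rcases hx.eq_or_lt with rfl | hx'
    · simp
    · have : Real.log x ≤ Real.log (x + y) := Real.log_le_log hx' (by linarith)
      unfold Real.negMulLog; nlinarith
  have h1 := key a b ha hb
  have h2 := key b a hb ha
  have : Real.negMulLog (a + b) = -a * Real.log (a + b) + -b * Real.log (b + a) := by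
    unfold Real.negMulLog; rw [add_comm b a]; ring
  linarith

lemma nml_add_le {a b : ℝ} (ha : 0 ≤ a) (hb : 0 ≤ b) :
    Real.negMulLog a + Real.negMulLog b ≤ Real.negMulLog (a + b) + (a + b) * Real.log 2 := by
  rcases ha.eq_or_lt with rfl | ha'
  · simp; positivity
  rcases hb.eq_or_lt with rfl | hb'
  · simp; positivity
  have hs : 0 < a + b := by linarith
  have h := Real.binEntropy_le_log_two (p := a / (a + b))
  rw [Real.binEntropy] at h
  have h1 : 1 - a / (a + b) = b / (a + b) := by field_simp; ring
  rw [h1] at h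
  have e1 : Real.log (a / (a + b))⁻¹ = Real.log (a + b) - Real.log a := by
    rw [Real.log_inv, Real.log_div ha'.ne' hs.ne']; ring
  have e2 : Real.log (b / (a + b))⁻¹ = Real.log (a + b) - Real.log b := by
    rw [Real.log_inv, Real.log_div hb'.ne' hs.ne']; ring
  rw [e1, e2] at h
  have := mul_le_mul_of_nonneg_left h hs.le
  unfold Real.negMulLog
  field_simp at this
  nlinarith

lemma nml_le_one {t : ℝ} (ht : 0 ≤ t) : Real.negMulLog t ≤ 1 := by
  rcases ht.eq_or_lt with rfl | ht'
  · simp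
  have := Real.log_le_sub_one_of_pos (inv_pos.2 ht')
  rw [Real.log_inv] at this
  unfold Real.negMulLog
  have h2 : t * (-Real.log t) ≤ t * (t⁻¹ - 1) := mul_le_mul_of_nonneg_left (by linarith) ht
  have : t * (t⁻¹ - 1) = 1 - t := by field_simp
  nlinarith

lemma sum_nml_le {S : Finset ℤ} (hS : S.Nonempty) {p : ℤ → ℝ}
    (hp : ∀ k ∈ S, 0 ≤ p k) (hsum : ∑ k ∈ S, p k ≤ 1) :
    ∑ k ∈ S, Real.negMulLog (p k) ≤ Real.log S.card + 1 := by
  set N : ℝ := (S.card : ℝ) with hNdef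
  have hN : 0 < N := by
    have := Finset.card_pos.mpr hS
    positivity
  have hJ := Real.concaveOn_negMulLog.le_map_sum (t := S) (w := fun _ => 1 / N)
      (p := fun k => N * p k) (fun i hi => by positivity)
      (by rw [Finset.sum_const, nsmul_eq_mul, ← hNdef]; field_simp)
      (fun i hi => by have := hp i hi; simp only [Set.mem_Ici]; positivity)
  simp only [smul_eq_mul] at hJ
  have hx : ∀ k ∈ S, 1 / N * (N * p k) = p k := by intro k _; field_simp
  rw [Finset.sum_congr rfl hx] at hJ
  have hterm : ∀ k ∈ S, 1 / N * Real.negMulLog (N * p k)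
      = Real.negMulLog (p k) - Real.log N * p k := by
    intro k _
    rw [Real.negMulLog_mul]
    unfold Real.negMulLog
    field_simp
    ring
  rw [Finset.sum_congr rfl hterm, Finset.sum_sub_distrib, ← Finset.mul_sum] at hJ
  have hps : 0 ≤ ∑ k ∈ S, p k := Finset.sum_nonneg hp
  have hnml := nml_le_one hps
  have hlogN : 0 ≤ Real.log N := Real.log_nonneg (by
    have : (1 : ℕ) ≤ S.card := Finset.card_pos.mpr hS
    rw [hNdef]; exact_mod_cast this)
  nlinarith [mul_le_mul_of_nonneg_left hsum hlogN]

lemma sum_even_odd (N : ℤ) (f : ℤ → ℝ) :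
    ∑ j ∈ Finset.Icc (-(2*N)) (2*N - 1), f j
      = ∑ k ∈ Finset.Icc (-N) (N-1), (f (2*k) + f (2*k+1)) := by
  have h1 : ∑ k ∈ Finset.Icc (-N) (N-1), (f (2*k) + f (2*k+1))
      = ∑ x ∈ (Finset.Icc (-N) (N-1)) ×ˢ ({0,1} : Finset ℤ), f (2*x.1 + x.2) := by
    rw [Finset.sum_product]
    refine Finset.sum_congr rfl fun k _ => ?_
    simp
  rw [h1]
  refine Finset.sum_nbij' (fun j => (j / 2, j % 2)) (fun x => 2*x.1 + x.2) ?_ ?_ ?_ ?_ ?_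
  · intro a ha
    simp only [Finset.mem_product, Finset.mem_Icc, Finset.mem_insert, Finset.mem_singleton] at ha ⊢
    omega
  · intro a ha
    simp only [Finset.mem_product, Finset.mem_Icc, Finset.mem_insert, Finset.mem_singleton] at ha ⊢
    omega
  · intro a ha
    show 2 * (a / 2) + a % 2 = a
    omega
  · intro a ha
    simp only [Finset.mem_product, Finset.mem_Icc, Finset.mem_insert, Finset.mem_singleton] at ha
    refine Prod.ext ?_ ?_ <;> simp <;> omega
  · intro a ha
    have : 2 * (a / 2) + a % 2 = a := by omega
    rw [this]

lemma Ico_cells_disjoint {c : ℝ} (hc : 0 < c) {a b : ℤ} (hab : a ≠ b) :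
    Disjoint (Set.Ico ((a:ℝ)*c) (((a:ℝ)+1)*c)) (Set.Ico ((b:ℝ)*c) (((b:ℝ)+1)*c)) := by
  rw [Set.Ico_disjoint_Ico]
  rcases lt_or_gt_of_ne hab with h|h
  · have h1 : ((a:ℝ)+1) ≤ (b:ℝ) := by exact_mod_cast h
    calc min (((a:ℝ)+1)*c) (((b:ℝ)+1)*c) ≤ ((a:ℝ)+1)*c := min_le_left _ _
    _ ≤ (b:ℝ)*c := by nlinarith
    _ ≤ max ((a:ℝ)*c) ((b:ℝ)*c) := le_max_right _ _
  · have h1 : ((b:ℝ)+1) ≤ (a:ℝ) := by exact_mod_cast h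
    calc min (((a:ℝ)+1)*c) (((b:ℝ)+1)*c) ≤ ((b:ℝ)+1)*c := min_le_right _ _
    _ ≤ (a:ℝ)*c := by nlinarith
    _ ≤ max ((a:ℝ)*c) ((b:ℝ)*c) := le_max_left _ _

noncomputable def dyC (i : ℕ) : ℝ := 2 ^ (-(i:ℤ))
noncomputable def dyP (μ : Measure ℝ) (i : ℕ) (k : ℤ) : ℝ :=
  (μ (Set.Ico ((k:ℝ) * dyC i) (((k:ℝ)+1) * dyC i))).toReal
noncomputable def dyS (B : ℤ) (i : ℕ) : Finset ℤ := Finset.Icc (-(2^i*B)) (2^i*B - 1)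

lemma dyC_pos (i : ℕ) : 0 < dyC i := by unfold dyC; positivity

lemma dyC_succ (i : ℕ) : dyC i = 2 * dyC (i+1) := by
  unfold dyC
  rw [show (-((i:ℕ)+1:ℕ) : ℤ) = (-(i:ℤ)) + (-1) by push_cast; ring,
    zpow_add₀ (two_ne_zero), zpow_neg_one]
  ring

lemma dyC_mul (i : ℕ) : (2:ℝ)^i * dyC i = 1 := by
  unfold dyC
  rw [← zpow_natCast (2:ℝ) i, ← zpow_add₀ (two_ne_zero)]
  simp

lemma dyP_nonneg (μ : Measure ℝ) (i : ℕ) (k : ℤ) : 0 ≤ dyP μ i k := ENNReal.toReal_nonneg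

lemma dyP_sum_le_one (μ : Measure ℝ) [IsProbabilityMeasure μ] (i : ℕ) (S : Finset ℤ) :
    ∑ k ∈ S, dyP μ i k ≤ 1 := by
  unfold dyP
  rw [← ENNReal.toReal_sum (fun k _ => measure_ne_top μ _)]
  have hd : (S : Set ℤ).PairwiseDisjoint
      (fun k : ℤ => Set.Ico ((k:ℝ) * dyC i) (((k:ℝ)+1) * dyC i)) :=
    fun a _ b _ hab => Ico_cells_disjoint (dyC_pos i) hab
  rw [← measure_biUnion_finset hd (fun k _ => measurableSet_Ico)]
  have h1 : μ (⋃ k ∈ S, Set.Ico ((k:ℝ) * dyC i) (((k:ℝ)+1) * dyC i)) ≤ 1 := prob_le_one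
  calc (μ _).toReal ≤ (1 : ENNReal).toReal := ENNReal.toReal_mono ENNReal.one_ne_top h1
  _ = 1 := by simp

lemma dyP_split (μ : Measure ℝ) [IsProbabilityMeasure μ] (i : ℕ) (k : ℤ) :
    dyP μ i k = dyP μ (i+1) (2*k) + dyP μ (i+1) (2*k+1) := by
  unfold dyP
  have hc := dyC_pos (i+1)
  have key : Set.Ico ((k:ℝ) * dyC i) (((k:ℝ)+1) * dyC i)
      = Set.Ico (((2*k:ℤ):ℝ) * dyC (i+1)) ((((2*k:ℤ):ℝ)+1) * dyC (i+1))
        ∪ Set.Ico ((((2*k+1:ℤ)):ℝ) * dyC (i+1)) ((((2*k+1:ℤ):ℝ)+1) * dyC (i+1)) := by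
    have e1 : (((2*k:ℤ):ℝ)+1) = ((2*k+1:ℤ):ℝ) := by push_cast; ring
    rw [e1, Set.Ico_union_Ico_eq_Ico (by push_cast; nlinarith) (by push_cast; nlinarith)]
    rw [dyC_succ i]
    push_cast
    ring_nf
  rw [key, measure_union (Ico_cells_disjoint hc (by omega)) measurableSet_Ico,
    ENNReal.toReal_add (measure_ne_top μ _) (measure_ne_top μ _)]

lemma dyS_nonempty {B : ℤ} (hB : 1 ≤ B) (i : ℕ) : (dyS B i).Nonempty := by
  refine ⟨0, ?_⟩
  simp only [dyS, Finset.mem_Icc]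
  have h2 : (0:ℤ) < 2^i := pow_pos (by norm_num) i
  have : (1:ℤ) ≤ 2^i := by simpa using Int.add_one_le_of_lt h2
  constructor <;> nlinarith

lemma dyS_card {B : ℤ} (hB : 1 ≤ B) (i : ℕ) : ((dyS B i).card : ℝ) = 2^(i+1) * (B:ℝ) := by
  have : (dyS B i).card = (2^(i+1)*B).toNat := by
    rw [dyS, Int.card_Icc]
    congr 1
    ring
  rw [this]
  have hpos : (0:ℤ) ≤ 2^(i+1)*B := by positivity
  rw [show ((2^(i+1)*B).toNat : ℝ) = ((2^(i+1)*B : ℤ) : ℝ) by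
    exact_mod_cast Int.toNat_of_nonneg hpos]
  push_cast
  ring

section mu
variable {r : ℝ} {μ : Measure ℝ} [IsProbabilityMeasure μ]
  (hr : 1 ≤ r) (hμr : μ (Set.Icc (-r) r) = 1)

include hμr in
lemma mu_out {s : Set ℝ} (h : s ⊆ (Set.Icc (-r) r)ᶜ) : μ s = 0 := by
  have hc : μ (Set.Icc (-r) r)ᶜ = 0 := by
    rw [measure_compl measurableSet_Icc (measure_ne_top μ _), hμr, measure_univ, tsub_self]
  exact measure_mono_null h hc

include hr hμr in
lemma dyP_vanish (i : ℕ) (k : ℤ) (hk : k ∉ dyS (⌈r⌉ + 1) i) :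
    μ (Set.Ico ((k:ℝ) * dyC i) (((k:ℝ)+1) * dyC i)) = 0 := by
  set B : ℤ := ⌈r⌉ + 1 with hB
  have hBr : r + 1 ≤ (B:ℝ) := by
    have := Int.le_ceil r
    rw [hB]; push_cast; linarith
  have hcast : ((2^i * B : ℤ):ℝ) * dyC i = (B:ℝ) := by
    push_cast
    rw [mul_comm ((2:ℝ)^i) (B:ℝ), mul_assoc, dyC_mul, mul_one]
  simp only [dyS, Finset.mem_Icc, not_and_or, not_le] at hk
  have hc := dyC_pos i
  rcases hk with hk | hk
  · apply mu_out hμr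
    intro x hx
    simp only [Set.mem_Ico] at hx
    simp only [Set.mem_compl_iff, Set.mem_Icc, not_and_or, not_le]
    left
    have h1 : ((k:ℝ)+1) ≤ ((-(2^i*B) : ℤ):ℝ) := by exact_mod_cast hk
    have h2 : ((k:ℝ)+1) * dyC i ≤ ((-(2^i*B) : ℤ):ℝ) * dyC i :=
      mul_le_mul_of_nonneg_right h1 hc.le
    have h3 : ((-(2^i*B) : ℤ):ℝ) * dyC i = -(B:ℝ) := by
      push_cast at hcast ⊢
      nlinarith [hcast]
    linarith [hx.2]
  · apply mu_out hμr
    intro x hx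
    simp only [Set.mem_Ico] at hx
    simp only [Set.mem_compl_iff, Set.mem_Icc, not_and_or, not_le]
    right
    have hk' : 2^i*B ≤ k := by omega
    have h1 : ((2^i*B : ℤ):ℝ) ≤ (k:ℝ) := by exact_mod_cast hk'
    have h2 : ((2^i*B : ℤ):ℝ) * dyC i ≤ (k:ℝ) * dyC i :=
      mul_le_mul_of_nonneg_right h1 hc.le
    rw [hcast] at h2
    linarith [hx.1]

include hr hμr in
lemma dyadEntropyR_eq (i : ℕ) :
    dyadEntropyR μ i = ∑ k ∈ dyS (⌈r⌉ + 1) i, Real.negMulLog (dyP μ i k) := by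
  unfold dyadEntropyR
  exact tsum_eq_sum (fun k hk => by
    show Real.negMulLog (μ (Set.Ico ((k:ℝ) * dyC i) (((k:ℝ)+1) * dyC i))).toReal = 0
    rw [dyP_vanish hr hμr i k hk]; simp)

include hr hμr in
lemma entropy_nonneg (i : ℕ) : 0 ≤ dyadEntropyR μ i := by
  rw [dyadEntropyR_eq hr hμr i]
  refine Finset.sum_nonneg fun k _ => Real.negMulLog_nonneg (dyP_nonneg μ i k) ?_
  unfold dyP
  calc (μ _).toReal ≤ (1 : ENNReal).toReal := ENNReal.toReal_mono ENNReal.one_ne_top prob_le_one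
  _ = 1 := by simp

include hr hμr in
lemma entropy_upper (i : ℕ) : dyadEntropyR μ i ≤ i + 4 + Real.log r := by
  rw [dyadEntropyR_eq hr hμr i]
  have hB1 : (1:ℤ) ≤ ⌈r⌉ + 1 := by
    have : (0:ℤ) < ⌈r⌉ := Int.ceil_pos.mpr (by linarith)
    omega
  have h := sum_nml_le (dyS_nonempty hB1 i) (fun k _ => dyP_nonneg μ i k)
    (dyP_sum_le_one μ i _)
  have hcard := dyS_card hB1 i
  have hBub : ((⌈r⌉ + 1 : ℤ):ℝ) ≤ 3*r := by
    have := Int.ceil_lt_add_one r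
    push_cast
    linarith
  have hBpos : (0:ℝ) < ((⌈r⌉ + 1 : ℤ):ℝ) := by exact_mod_cast hB1
  have hlog : Real.log ((dyS (⌈r⌉ + 1) i).card)
      ≤ (i+1)*Real.log 2 + Real.log (3*r) := by
    rw [hcard, Real.log_mul (by positivity) hBpos.ne', Real.log_pow]
    have h5 := Real.log_le_log hBpos hBub
    push_cast at h5 ⊢
    linarith
  have hlog3 : Real.log (3*r) = Real.log 3 + Real.log r :=
    Real.log_mul (by norm_num) (by linarith)
  have h3 : Real.log 3 ≤ 2 := by
    have := Real.log_le_sub_one_of_pos (show (0:ℝ) < 3 by norm_num)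
    linarith
  have h2 : Real.log 2 ≤ 1 := by
    have := Real.log_le_sub_one_of_pos (show (0:ℝ) < 2 by norm_num)
    linarith
  have h2' : 0 ≤ Real.log 2 := Real.log_nonneg (by norm_num)
  have hi : (0:ℝ) ≤ (i:ℝ) := Nat.cast_nonneg i
  nlinarith [h, hlog]

include hr hμr in
lemma entropy_step (i : ℕ) : dyadEntropyR μ i ≤ dyadEntropyR μ (i+1)
    ∧ dyadEntropyR μ (i+1) ≤ dyadEntropyR μ i + 1 := by
  rw [dyadEntropyR_eq hr hμr i, dyadEntropyR_eq hr hμr (i+1)]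
  set B : ℤ := ⌈r⌉ + 1 with hB
  have hSrw : dyS B (i+1) = Finset.Icc (-(2*(2^i*B))) (2*(2^i*B) - 1) := by
    unfold dyS
    congr 2
    · ring
    · ring
  rw [hSrw, sum_even_odd (2^i*B) (fun k => Real.negMulLog (dyP μ (i+1) k))]
  have hSi : dyS B i = Finset.Icc (-(2^i*B)) (2^i*B - 1) := rfl
  rw [hSi]
  constructor
  · refine Finset.sum_le_sum fun k _ => ?_
    rw [dyP_split μ i k]
    exact nml_subadd (dyP_nonneg μ _ _) (dyP_nonneg μ _ _)
  · have h2 : Real.log 2 ≤ 1 := by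
      have := Real.log_le_sub_one_of_pos (show (0:ℝ) < 2 by norm_num)
      linarith
    have h2' : 0 ≤ Real.log 2 := Real.log_nonneg (by norm_num)
    calc ∑ k ∈ Finset.Icc (-(2^i*B)) (2^i*B - 1),
          (Real.negMulLog (dyP μ (i+1) (2*k)) + Real.negMulLog (dyP μ (i+1) (2*k+1)))
        ≤ ∑ k ∈ Finset.Icc (-(2^i*B)) (2^i*B - 1),
          (Real.negMulLog (dyP μ i k) + dyP μ i k * Real.log 2) := by
          refine Finset.sum_le_sum fun k _ => ?_
          have := nml_add_le (dyP_nonneg μ (i+1) (2*k)) (dyP_nonneg μ (i+1) (2*k+1))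
          rw [dyP_split μ i k]
          linarith
    _ = (∑ k ∈ Finset.Icc (-(2^i*B)) (2^i*B - 1), Real.negMulLog (dyP μ i k))
        + (∑ k ∈ Finset.Icc (-(2^i*B)) (2^i*B - 1), dyP μ i k) * Real.log 2 := by
          rw [Finset.sum_add_distrib, ← Finset.sum_mul]
    _ ≤ (∑ k ∈ Finset.Icc (-(2^i*B)) (2^i*B - 1), Real.negMulLog (dyP μ i k)) + 1 := by
          have := dyP_sum_le_one μ i (Finset.Icc (-(2^i*B)) (2^i*B - 1))
          nlinarith

include hr hμr in
lemma entropy_mono (i t : ℕ) : dyadEntropyR μ i ≤ dyadEntropyR μ (i+t)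
    ∧ dyadEntropyR μ (i+t) ≤ dyadEntropyR μ i + t := by
  induction t with
  | zero => simp
  | succ t ih =>
    have hs := entropy_step hr hμr (i+t)
    constructor
    · calc dyadEntropyR μ i ≤ dyadEntropyR μ (i+t) := ih.1
      _ ≤ dyadEntropyR μ (i+t+1) := hs.1
    · push_cast
      calc dyadEntropyR μ (i+(t+1)) = dyadEntropyR μ (i+t+1) := by rw [add_assoc]
      _ ≤ dyadEntropyR μ (i+t) + 1 := hs.2
      _ ≤ dyadEntropyR μ i + (t + 1) := by have := ih.2; push_cast at this ⊢; linarith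

end mu
end helpers

set_option maxHeartbeats 1000000 in
/-- Global entropy from local (conditional) entropies: for `μ ∈ 𝒫([-r,r])` with `r ≥ 1`
and integers `0 < m < n`,
`(1/n) H(μ,𝒟_n) = avg_{0 ≤ i ≤ n} (1/m) H(μ, 𝒟_{i+m} | 𝒟_i) + O(m/n + (log r)/n)`,
where `H(μ, 𝒟_{i+m} | 𝒟_i) = H(μ, 𝒟_{i+m}) - H(μ, 𝒟_i)`. -/
theorem entropy_local_to_global :
    ∃ C : ℝ, 0 < C ∧ ∀ (r : ℝ) (μ : Measure ℝ), IsProbabilityMeasure μ →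
      1 ≤ r → μ (Set.Icc (-r) r) = 1 →
      ∀ m n : ℕ, 0 < m → m < n →
        |(1 / n : ℝ) * dyadEntropyR μ n -
          (1 / (n + 1) : ℝ) * ∑ i ∈ Finset.range (n + 1),
            (1 / m : ℝ) * (dyadEntropyR μ (i + m) - dyadEntropyR μ i)| ≤
        C * (m + Real.log r) / n := by
  refine ⟨100, by norm_num, ?_⟩
  intro r μ hprob hr hμr m n hm hmn
  haveI := hprob
  set H : ℕ → ℝ := dyadEntropyR μ with hH
  set L : ℝ := Real.log r with hLdef
  have hL : 0 ≤ L := Real.log_nonneg hr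
  set N : ℝ := (n : ℝ) with hNdef
  set M : ℝ := (m : ℝ) with hMdef
  have hM1 : 1 ≤ M := by rw [hMdef]; exact_mod_cast hm
  have hMN : M + 1 ≤ N := by rw [hMdef, hNdef]; exact_mod_cast hmn
  have hN0 : (0:ℝ) < N := by linarith
  have hM0 : (0:ℝ) < M := by linarith
  -- entropy facts
  have hE0 : 0 ≤ H n := entropy_nonneg hr hμr n
  have hE2 : H n ≤ N + 4 + L := by
    have := entropy_upper hr hμr n
    rw [hH, hNdef, hLdef]
    exact this
  -- telescoping
  set TA : ℝ := ∑ j ∈ Finset.Ico (n+1) (n+m+1), H j with hTA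
  set TB : ℝ := ∑ j ∈ Finset.Ico 0 m, H j with hTB
  have htel : ∑ i ∈ Finset.range (n + 1), (1 / M) * (H (i + m) - H i)
      = (1 / M) * (TA - TB) := by
    rw [← Finset.mul_sum, Finset.sum_sub_distrib]
    have e1 : ∑ i ∈ Finset.range (n+1), H (i + m) = ∑ j ∈ Finset.Ico m (n+m+1), H j := by
      rw [Finset.sum_Ico_eq_sum_range]
      have : n + m + 1 - m = n + 1 := by omega
      rw [this]
      exact (Finset.sum_congr rfl fun i _ => by rw [add_comm]).symm
    have e2 : ∑ i ∈ Finset.range (n+1), H i = ∑ j ∈ Finset.Ico 0 (n+1), H j := by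
      rw [Finset.range_eq_Ico]
    have e3 : ∑ j ∈ Finset.Ico m (n+1), H j + ∑ j ∈ Finset.Ico (n+1) (n+m+1), H j
        = ∑ j ∈ Finset.Ico m (n+m+1), H j :=
      Finset.sum_Ico_consecutive _ (by omega) (by omega)
    have e4 : ∑ j ∈ Finset.Ico 0 m, H j + ∑ j ∈ Finset.Ico m (n+1), H j
        = ∑ j ∈ Finset.Ico 0 (n+1), H j :=
      Finset.sum_Ico_consecutive _ (by omega) (by omega)
    rw [e1, e2]
    congr 1
    rw [hTA, hTB]
    linarith [e3, e4]
  -- bounds on TA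
  have hcardA : (Finset.Ico (n+1) (n+m+1)).card = m := by
    rw [Nat.card_Ico]; omega
  have hTA1 : M * H n ≤ TA := by
    rw [hTA]
    calc M * H n = (Finset.Ico (n+1) (n+m+1)).card • H n := by
          rw [hcardA, nsmul_eq_mul, hMdef]
    _ ≤ ∑ j ∈ Finset.Ico (n+1) (n+m+1), H j := by
          refine Finset.card_nsmul_le_sum _ _ _ fun j hj => ?_
          simp only [Finset.mem_Ico] at hj
          have := (entropy_mono hr hμr n (j - n)).1
          rwa [show n + (j - n) = j by omega] at this
  have hTA2 : TA ≤ M * (H n + M) := by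
    rw [hTA]
    calc ∑ j ∈ Finset.Ico (n+1) (n+m+1), H j
        ≤ (Finset.Ico (n+1) (n+m+1)).card • (H n + M) := by
          refine Finset.sum_le_card_nsmul _ _ _ fun j hj => ?_
          simp only [Finset.mem_Ico] at hj
          have := (entropy_mono hr hμr n (j - n)).2
          rw [show n + (j - n) = j by omega] at this
          have hj2 : (j - n : ℕ) ≤ m := by omega
          have hj3 : ((j - n : ℕ) : ℝ) ≤ M := by rw [hMdef]; exact_mod_cast hj2
          linarith
    _ = M * (H n + M) := by rw [hcardA, nsmul_eq_mul, hMdef]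
  -- bounds on TB
  have hTB1 : 0 ≤ TB := Finset.sum_nonneg fun j _ => entropy_nonneg hr hμr j
  have hTB2 : TB ≤ M * (M + 3 + L) := by
    rw [hTB]
    calc ∑ j ∈ Finset.Ico 0 m, H j ≤ (Finset.Ico 0 m).card • (M + 3 + L) := by
          refine Finset.sum_le_card_nsmul _ _ _ fun j hj => ?_
          simp only [Finset.mem_Ico] at hj
          have := entropy_upper hr hμr j
          have hj1 : j + 1 ≤ m := hj.2
          have hjm' : ((j:ℝ)) + 1 ≤ M := by rw [hMdef]; exact_mod_cast hj1
          have hjm : ((j:ℝ)) ≤ M - 1 := by linarith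
          rw [hH, hLdef]
          calc dyadEntropyR μ j ≤ j + 4 + Real.log r := this
          _ ≤ M + 3 + Real.log r := by linarith
    _ = M * (M + 3 + L) := by rw [Nat.card_Ico, nsmul_eq_mul]; simp [hMdef]
  -- final arithmetic
  rw [htel]
  set E : ℝ := H n with hE
  set G : ℝ := (1 / M) * (TA - TB) with hG
  have hG1 : E - (M + 3 + L) ≤ G := by
    rw [hG]
    have h1 : M * (E - (M + 3 + L)) ≤ TA - TB := by nlinarith
    have h2 : (1/M) * (M * (E - (M + 3 + L))) ≤ (1/M) * (TA - TB) :=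
      mul_le_mul_of_nonneg_left h1 (by positivity)
    have h3 : (1/M) * (M * (E - (M + 3 + L))) = E - (M + 3 + L) := by
      field_simp
    linarith
  have hG2 : G ≤ E + M := by
    rw [hG]
    have h1 : TA - TB ≤ M * (E + M) := by nlinarith
    have h2 : (1/M) * (TA - TB) ≤ (1/M) * (M * (E + M)) :=
      mul_le_mul_of_nonneg_left h1 (by positivity)
    have h3 : (1/M) * (M * (E + M)) = E + M := by field_simp
    linarith
  clear_value TA TB
  clear_value E G
  clear htel hTA hTB hE hG hH hLdef hNdef hMdef
  clear_value H L N M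
  have hgoal : |(1/N) * E - (1/(N+1)) * G| ≤ 100 * (M + L) / N := by
    rw [abs_le]
    have hN1 : (0:ℝ) < N + 1 := by linarith
    constructor
    · have step1 : (1/N) * E - (1/(N+1)) * (E + M) ≤ (1/N) * E - (1/(N+1)) * G := by
        have := mul_le_mul_of_nonneg_left hG2 (le_of_lt (show (0:ℝ) < 1/(N+1) by positivity))
        linarith
      have step2 : -(100 * (M + L) / N) ≤ (1/N) * E - (1/(N+1)) * (E + M) := by
        have heq : (1/N) * E - (1/(N+1)) * (E + M) = (E - N*M) / (N*(N+1)) := by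
          field_simp
          ring
        rw [heq, neg_le, ← neg_div]
        rw [div_le_div_iff₀ (by positivity) hN0]
        nlinarith [mul_nonneg hL hN0.le, mul_nonneg (mul_nonneg hL hN0.le) hN0.le,
          mul_nonneg hE0 hN0.le, mul_nonneg hM0.le hN0.le,
          mul_nonneg (mul_nonneg hM0.le hN0.le) hN0.le]
      linarith
    · have step1 : (1/N) * E - (1/(N+1)) * G ≤ (1/N) * E - (1/(N+1)) * (E - (M + 3 + L)) := by
        have := mul_le_mul_of_nonneg_left hG1 (le_of_lt (show (0:ℝ) < 1/(N+1) by positivity))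
        linarith
      have step2 : (1/N) * E - (1/(N+1)) * (E - (M + 3 + L)) ≤ 100 * (M + L) / N := by
        have heq : (1/N) * E - (1/(N+1)) * (E - (M + 3 + L))
            = (E + N*(M + 3 + L)) / (N*(N+1)) := by
          field_simp
          ring
        rw [heq, div_le_div_iff₀ (by positivity) hN0]
        nlinarith [mul_le_mul_of_nonneg_right hE2 hN0.le,
          mul_nonneg (mul_nonneg (sub_nonneg.2 hM1) hN0.le) hN0.le,
          mul_nonneg hL hN0.le, mul_nonneg (mul_nonneg hL hN0.le) hN0.le,
          mul_nonneg (sub_nonneg.2 hM1) hN0.le]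
      linarith
  exact hgoal
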